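/- (Nuclear-norm cone inequality.) Let M be an m×n real matrix of rank r, let the columns of U ∈ ℝ^{m×r} form an orthonormal basis for the column space of M and the columns of V ∈ ℝ^{n×r} form an orthonormal basis for the row space of M, and let T ⊆ ℝ^{m×n} be the subspace spanned by all matrices of the form UA (A ∈ ℝ^{r×n}) and BVᵀ (B ∈ ℝ^{m×r}), with P_T and P_{T⊥} the orthogonal projections (with respect to the trace inner product) onto T and its orthogonal complement. If H is an m×n matrix with ‖M + H‖_* ≤ ‖M‖_*, then ‖P_{T⊥}(H)‖_* ≤ ‖P_T(H)‖_*, and consequently ‖H‖_* ≤ 2√(2r)·‖H‖_F. -/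

import Mathlib

open MeasureTheory ProbabilityTheory Real Matrix

/-- Frobenius norm of a real matrix. -/
noncomputable def frobNorm {m n : ℕ} (A : Matrix (Fin m) (Fin n) ℝ) : ℝ :=
  Real.sqrt (∑ i, ∑ j, (A i j)^2)

/-- The positive semidefinite square root (the removed `Matrix.PosSemidef.sqrt`, old definition). -/
noncomputable def psdSqrt {n : ℕ} {M : Matrix (Fin n) (Fin n) ℝ} (hA : M.PosSemidef) :
    Matrix (Fin n) (Fin n) ℝ :=
  hA.1.eigenvectorUnitary.1 * diagonal ((↑) ∘ (√·) ∘ hA.1.eigenvalues) *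
    (star hA.1.eigenvectorUnitary : Matrix (Fin n) (Fin n) ℝ)

/-- Nuclear norm: trace of the psd square root of Aᵀ * A. -/
noncomputable def nucNorm {m n : ℕ} (A : Matrix (Fin m) (Fin n) ℝ) : ℝ :=
  (psdSqrt (Matrix.posSemidef_conjTranspose_mul_self A)).trace

namespace NNaux

/- generic small lemmas -/
lemma conjT_eq (A : Matrix (Fin m) (Fin n) ℝ) : Aᴴ = Aᵀ := by ext; simp [conjTranspose]

lemma mul_vmv (M : Matrix (Fin m) (Fin n) ℝ) (a : Fin n → ℝ) (b : Fin n → ℝ) :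
    M * vecMulVec a b = vecMulVec (M *ᵥ a) b := by
  ext i j; simp [mul_apply, vecMulVec_apply, mulVec, dotProduct, Finset.sum_mul, mul_assoc]

lemma vmv_mul (a : Fin m → ℝ) (b : Fin n → ℝ) (M : Matrix (Fin n) (Fin n) ℝ) :
    vecMulVec a b * M = vecMulVec a (Mᵀ *ᵥ b) := by
  ext i j
  simp [mul_apply, vecMulVec_apply, mulVec, dotProduct, Finset.mul_sum, transpose_apply]
  congr 1; ext k; ring

lemma vmv_mul_vmv (a : Fin m → ℝ) (b c : Fin n → ℝ) (d : Fin n → ℝ) :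
    vecMulVec a b * vecMulVec c d = (b ⬝ᵥ c) • vecMulVec a d := by
  ext i j
  simp [mul_apply, vecMulVec_apply, dotProduct, Finset.sum_mul, Finset.mul_sum]
  congr 1; ext k; ring

lemma vmv_smul_left (t : ℝ) (a : Fin m → ℝ) (b : Fin n → ℝ) :
    vecMulVec (t • a) b = t • vecMulVec a b := by
  ext i j; simp [vecMulVec_apply]; ring

lemma trace_vmv (a b : Fin n → ℝ) : (vecMulVec a b).trace = a ⬝ᵥ b := by
  simp [trace, vecMulVec_apply, dotProduct, diag]

lemma vmv_transpose (a : Fin m → ℝ) (b : Fin n → ℝ) :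
    (vecMulVec a b)ᵀ = vecMulVec b a := by
  ext i j; simp [vecMulVec_apply, mul_comm]

lemma dot_mulVec_left (M : Matrix (Fin m) (Fin n) ℝ) (x : Fin m → ℝ) (y : Fin n → ℝ) :
    (Mᵀ *ᵥ x) ⬝ᵥ y = x ⬝ᵥ (M *ᵥ y) := by
  simp only [dotProduct, mulVec, dotProduct, Finset.sum_mul, Finset.mul_sum, transpose_apply]
  rw [Finset.sum_comm]
  congr 1; ext k; congr 1; ext i; ring

lemma dot_self_nonneg (x : Fin n → ℝ) : 0 ≤ x ⬝ᵥ x := by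
  simp only [dotProduct, ← pow_two]
  positivity

lemma dot_CS (x y : Fin n → ℝ) : x ⬝ᵥ y ≤ Real.sqrt (x ⬝ᵥ x) * Real.sqrt (y ⬝ᵥ y) := by
  have h := Finset.sum_mul_sq_le_sq_mul_sq Finset.univ x y
  have h2 : (x ⬝ᵥ y)^2 ≤ (x ⬝ᵥ x) * (y ⬝ᵥ y) := by
    simpa [dotProduct, pow_two] using h
  calc x ⬝ᵥ y ≤ |x ⬝ᵥ y| := le_abs_self _
    _ = Real.sqrt ((x ⬝ᵥ y)^2) := (Real.sqrt_sq_eq_abs _).symm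
    _ ≤ Real.sqrt ((x ⬝ᵥ x) * (y ⬝ᵥ y)) := Real.sqrt_le_sqrt h2
    _ = Real.sqrt (x ⬝ᵥ x) * Real.sqrt (y ⬝ᵥ y) := Real.sqrt_mul (dot_self_nonneg x) _

lemma psd_smul_vmv (t : ℝ) (ht : 0 ≤ t) (a : Fin n → ℝ) :
    (t • vecMulVec a a).PosSemidef := by
  refine Matrix.PosSemidef.of_dotProduct_mulVec_nonneg ?_ ?_
  · unfold IsHermitian
    rw [conjT_eq, transpose_smul, vmv_transpose]
  · intro x
    have : (t • vecMulVec a a) *ᵥ x = (t * (a ⬝ᵥ x)) • a := by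
      funext i
      simp only [mulVec, vecMulVec_apply, dotProduct, Pi.smul_apply, smul_eq_mul,
        Matrix.smul_apply, Finset.mul_sum]
      rw [Finset.sum_mul]
      congr 1; ext k; ring
    rw [this]
    simp only [star_trivial, dotProduct_smul, smul_eq_mul, RCLike.star_def]
    have : x ⬝ᵥ a = a ⬝ᵥ x := dotProduct_comm _ _
    simp only [this]
    have : (0:ℝ) ≤ t * (a ⬝ᵥ x) * (a ⬝ᵥ x) := by nlinarith [sq_nonneg (a ⬝ᵥ x)]
    simpa using this

/- eigen data of AᴴA -/
variable (A : Matrix (Fin m) (Fin n) ℝ)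

noncomputable def hS : (Aᴴ * A).PosSemidef := Matrix.posSemidef_conjTranspose_mul_self A
noncomputable def eig (i : Fin n) : ℝ := (hS A).1.eigenvalues i
noncomputable def v (i : Fin n) : Fin n → ℝ := ((hS A).1.eigenvectorBasis i : EuclideanSpace ℝ (Fin n))

lemma eig_nonneg (i) : 0 ≤ eig A i := (hS A).eigenvalues_nonneg i

lemma mulVec_v (i) : (Aᴴ * A) *ᵥ v A i = eig A i • v A i :=
  (hS A).1.mulVec_eigenvectorBasis i

lemma v_dot (i j) : v A i ⬝ᵥ v A j = if i = j then 1 else 0 := by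
  have h := orthonormal_iff_ite.mp (hS A).1.eigenvectorBasis.orthonormal i j
  simpa [PiLp.inner_apply, dotProduct, v, RCLike.inner_apply, mul_comm] using h

lemma nucNorm_eq : nucNorm A = ∑ i, Real.sqrt (eig A i) := by
  unfold nucNorm
  rw [psdSqrt, Matrix.trace_mul_cycle]
  have h1 : (star (hS A).1.eigenvectorUnitary : Matrix (Fin n) (Fin n) ℝ) *
      ((hS A).1.eigenvectorUnitary : Matrix (Fin n) (Fin n) ℝ) = 1 :=
    (hS A).1.eigenvectorUnitary.2.1
  rw [h1, one_mul, Matrix.trace_diagonal]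
  rfl

lemma sum_vvT : ∑ i, vecMulVec (v A i) (v A i) = (1 : Matrix (Fin n) (Fin n) ℝ) := by
  have h2 : ((hS A).1.eigenvectorUnitary : Matrix (Fin n) (Fin n) ℝ) *
      (star (hS A).1.eigenvectorUnitary : Matrix (Fin n) (Fin n) ℝ) = 1 :=
    (hS A).1.eigenvectorUnitary.2.2
  rw [← h2]
  ext k l
  simp [mul_apply, vecMulVec_apply, Matrix.sum_apply, v, Matrix.star_apply,
    Matrix.IsHermitian.eigenvectorUnitary_apply]

lemma Av_dot (i j) : (A *ᵥ v A i) ⬝ᵥ (A *ᵥ v A j) = if i = j then eig A i else 0 := by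
  have h := dot_mulVec_left Aᵀ (v A i) (A *ᵥ v A j)
  rw [transpose_transpose] at h
  rw [h, mulVec_mulVec, ← conjT_eq, mulVec_v, dotProduct_smul, smul_eq_mul, v_dot]
  rcases eq_or_ne i j with rfl | hij <;> simp [*]

/- the dual bound -/
lemma trace_le (Q : Matrix (Fin m) (Fin n) ℝ) (hQ : ((1 : Matrix (Fin n) (Fin n) ℝ) - Qᵀ * Q).PosSemidef) :
    (Qᵀ * A).trace ≤ nucNorm A := by
  have key : (Qᵀ * A).trace = ∑ i, (A *ᵥ v A i) ⬝ᵥ (Q *ᵥ v A i) := by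
    conv_lhs => rw [← mul_one (Qᵀ * A), ← sum_vvT A, Finset.mul_sum]
    rw [trace_sum]
    congr 1; ext i
    rw [mul_vmv, trace_vmv, ← mulVec_mulVec, dot_mulVec_left]
  rw [key, nucNorm_eq]
  apply Finset.sum_le_sum
  intro i _
  have hQv : (Q *ᵥ v A i) ⬝ᵥ (Q *ᵥ v A i) ≤ 1 := by
    have h0 := hQ.dotProduct_mulVec_nonneg (v A i)
    simp only [star_trivial, RCLike.re_to_real] at h0
    rw [sub_mulVec, one_mulVec, dotProduct_sub, ← mulVec_mulVec] at h0
    have h1 : v A i ⬝ᵥ (Qᵀ *ᵥ (Q *ᵥ v A i)) = (Q *ᵥ v A i) ⬝ᵥ (Q *ᵥ v A i) := by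
      rw [dotProduct_comm, dot_mulVec_left]
    rw [h1, v_dot] at h0
    simp at h0
    linarith
  calc (A *ᵥ v A i) ⬝ᵥ (Q *ᵥ v A i)
      ≤ Real.sqrt ((A *ᵥ v A i) ⬝ᵥ (A *ᵥ v A i)) * Real.sqrt ((Q *ᵥ v A i) ⬝ᵥ (Q *ᵥ v A i)) :=
        dot_CS _ _
    _ ≤ Real.sqrt (eig A i) * 1 := by
        apply mul_le_mul
        · rw [Av_dot]; simp
        · rw [← Real.sqrt_one]; exact Real.sqrt_le_sqrt hQv
        · exact Real.sqrt_nonneg _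
        · exact Real.sqrt_nonneg _
    _ = Real.sqrt (eig A i) := mul_one _


/- attainment construction -/
noncomputable def cc (i : Fin n) : ℝ := if eig A i = 0 then 0 else (Real.sqrt (eig A i))⁻¹
noncomputable def dd (i : Fin n) : ℝ := if eig A i = 0 then 0 else 1

noncomputable def Wm : Matrix (Fin n) (Fin n) ℝ := ∑ i, cc A i • vecMulVec (v A i) (v A i)
noncomputable def Qm : Matrix (Fin m) (Fin n) ℝ := A * Wm A
noncomputable def Pm : Matrix (Fin n) (Fin n) ℝ := ∑ i, dd A i • vecMulVec (v A i) (v A i)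

lemma Wm_transpose : (Wm A)ᵀ = Wm A := by
  unfold Wm
  rw [transpose_sum]
  congr 1; ext i
  rw [transpose_smul, vmv_transpose]

lemma S_mul_Wm : (Aᴴ * A) * Wm A = ∑ i, (cc A i * eig A i) • vecMulVec (v A i) (v A i) := by
  unfold Wm
  rw [Finset.mul_sum]
  congr 1; ext i
  rw [Matrix.mul_smul, mul_vmv, mulVec_v, vmv_smul_left, smul_smul, mul_comm]

lemma Wm_mul_diag (f : Fin n → ℝ) :
    Wm A * (∑ i, f i • vecMulVec (v A i) (v A i)) = ∑ i, (cc A i * f i) • vecMulVec (v A i) (v A i) := by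
  unfold Wm
  rw [Finset.sum_mul]
  have : ∀ i, (cc A i • vecMulVec (v A i) (v A i)) * (∑ j, f j • vecMulVec (v A j) (v A j))
      = (cc A i * f i) • vecMulVec (v A i) (v A i) := by
    intro i
    rw [Finset.mul_sum]
    have h1 : ∀ j, (cc A i • vecMulVec (v A i) (v A i)) * (f j • vecMulVec (v A j) (v A j))
        = ((cc A i * f j) * (if i = j then (1:ℝ) else 0)) • vecMulVec (v A i) (v A j) := by
      intro j
      rw [Matrix.smul_mul, Matrix.mul_smul, vmv_mul_vmv, v_dot, smul_smul, smul_smul]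
    simp only [h1]
    rw [Finset.sum_eq_single i]
    · simp
    · intro j _ hj
      simp [Ne.symm hj]
    · simp
  simp only [this]

lemma QmT_mul_Qm : (Qm A)ᵀ * Qm A = Pm A := by
  unfold Qm
  rw [transpose_mul, Wm_transpose, Matrix.mul_assoc, ← Matrix.mul_assoc Aᵀ A (Wm A), ← conjT_eq,
    S_mul_Wm, Wm_mul_diag]
  unfold Pm
  congr 1; ext i
  congr 1
  unfold cc dd
  rcases eq_or_ne (eig A i) 0 with h | h
  · simp [h]
  · simp only [h, if_false]
    have hpos : 0 < eig A i := (eig_nonneg A i).lt_of_ne (Ne.symm h)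
    have hs : Real.sqrt (eig A i) ≠ 0 := by
      rw [Real.sqrt_ne_zero']; exact hpos
    field_simp
    rw [Real.sq_sqrt hpos.le, div_self h]

lemma trace_QmT_mul : ((Qm A)ᵀ * A).trace = nucNorm A := by
  unfold Qm
  rw [transpose_mul, Wm_transpose, Matrix.mul_assoc, ← conjT_eq]
  have hsymm : (Aᴴ * A)ᵀ = Aᴴ * A := by
    rw [conjT_eq, transpose_mul, transpose_transpose]
  have hWS : Wm A * (Aᴴ * A) = ∑ i, (cc A i * eig A i) • vecMulVec (v A i) (v A i) := by
    have h := congrArg transpose (S_mul_Wm A)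
    rw [transpose_mul, Wm_transpose, hsymm, transpose_sum] at h
    rw [h]
    congr 1; ext i
    rw [transpose_smul, vmv_transpose]
  rw [hWS, trace_sum]
  rw [nucNorm_eq]
  congr 1; ext i
  rw [trace_smul, trace_vmv, v_dot]
  simp only [if_true, reduceIte, smul_eq_mul, mul_one]
  unfold cc
  rcases eq_or_ne (eig A i) 0 with h | h
  · simp [h]
  · have hpos : 0 < eig A i := (eig_nonneg A i).lt_of_ne (Ne.symm h)
    have hs : Real.sqrt (eig A i) ≠ 0 := by rw [Real.sqrt_ne_zero']; exact hpos
    simp only [h, if_false]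
    field_simp
    rw [Real.sq_sqrt hpos.le]


lemma dot_sq_CS (x y : Fin n → ℝ) : (x ⬝ᵥ y)^2 ≤ (x ⬝ᵥ x) * (y ⬝ᵥ y) := by
  have h := Finset.sum_mul_sq_le_sq_mul_sq Finset.univ x y
  simpa [dotProduct, pow_two] using h

lemma one_sub_psd_of_symm_idem (P : Matrix (Fin n) (Fin n) ℝ) (hsym : Pᵀ = P)
    (hidem : P * P = P) : ((1 : Matrix (Fin n) (Fin n) ℝ) - P).PosSemidef := by
  refine Matrix.PosSemidef.of_dotProduct_mulVec_nonneg ?_ ?_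
  · unfold IsHermitian
    rw [conjT_eq, transpose_sub, transpose_one, hsym]
  · intro x
    set y := P *ᵥ x with hy
    have ht : x ⬝ᵥ y = y ⬝ᵥ y := by
      have e1 : x ⬝ᵥ y = x ⬝ᵥ (P *ᵥ y) := by rw [hy, mulVec_mulVec, hidem]
      rw [e1, ← dot_mulVec_left, hsym]
    have hcs := dot_sq_CS x y
    rw [ht] at hcs
    have hy0 : 0 ≤ y ⬝ᵥ y := dot_self_nonneg y
    have hx0 : 0 ≤ x ⬝ᵥ x := dot_self_nonneg x
    have hle : y ⬝ᵥ y ≤ x ⬝ᵥ x := by nlinarith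
    simp only [star_trivial, RCLike.re_to_real]
    rw [sub_mulVec, one_mulVec, dotProduct_sub, ← hy, ht]
    linarith

lemma Pm_transpose : (Pm A)ᵀ = Pm A := by
  unfold Pm
  rw [transpose_sum]
  congr 1; ext i
  rw [transpose_smul, vmv_transpose]

lemma dsum_mul (f g : Fin n → ℝ) :
    (∑ i, f i • vecMulVec (v A i) (v A i)) * (∑ j, g j • vecMulVec (v A j) (v A j))
      = ∑ i, (f i * g i) • vecMulVec (v A i) (v A i) := by
  rw [Finset.sum_mul]
  have : ∀ i, (f i • vecMulVec (v A i) (v A i)) * (∑ j, g j • vecMulVec (v A j) (v A j))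
      = (f i * g i) • vecMulVec (v A i) (v A i) := by
    intro i
    rw [Finset.mul_sum]
    have h1 : ∀ j, (f i • vecMulVec (v A i) (v A i)) * (g j • vecMulVec (v A j) (v A j))
        = ((f i * g j) * (if i = j then (1:ℝ) else 0)) • vecMulVec (v A i) (v A j) := by
      intro j
      rw [Matrix.smul_mul, Matrix.mul_smul, vmv_mul_vmv, v_dot, smul_smul, smul_smul]
    simp only [h1]
    rw [Finset.sum_eq_single i]
    · simp
    · intro j _ hj
      simp [Ne.symm hj]
    · simp
  simp only [this]

lemma Pm_idem : Pm A * Pm A = Pm A := by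
  unfold Pm
  rw [dsum_mul]
  congr 1; ext i
  congr 1
  unfold dd
  rcases eq_or_ne (eig A i) 0 with h | h <;> simp [h]

lemma one_sub_Pm_psd : ((1 : Matrix (Fin n) (Fin n) ℝ) - Pm A).PosSemidef := by
  have hd : 1 - Pm A = ∑ i, (1 - dd A i) • vecMulVec (v A i) (v A i) := by
    conv_lhs => rw [← sum_vvT A]
    unfold Pm
    rw [← Finset.sum_sub_distrib]
    congr 1; ext i
    rw [sub_smul, one_smul]
  rw [hd]
  refine Finset.sum_induction _ (fun M : Matrix (Fin n) (Fin n) ℝ => M.PosSemidef)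
    (fun a b ha hb => ha.add hb) Matrix.PosSemidef.zero ?_
  intro i _
  apply psd_smul_vmv
  unfold dd
  rcases eq_or_ne (eig A i) 0 with h | h <;> simp [h]

lemma nucNorm_nonneg : 0 ≤ nucNorm A := by
  rw [nucNorm_eq]
  positivity

lemma sqrt_congr {X Y : Matrix (Fin n) (Fin n) ℝ} (hX : X.PosSemidef) (hY : Y.PosSemidef)
    (h : X = Y) : psdSqrt hX = psdSqrt hY := by subst h; rfl

lemma nucNorm_neg : nucNorm (-A) = nucNorm A := by
  have h : (-A)ᴴ * (-A) = Aᴴ * A := by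
    rw [conjTranspose_neg, Matrix.neg_mul, Matrix.mul_neg, neg_neg]
  unfold nucNorm
  rw [sqrt_congr (Matrix.posSemidef_conjTranspose_mul_self (-A))
    (Matrix.posSemidef_conjTranspose_mul_self A) h]

lemma nucNorm_triangle (B : Matrix (Fin m) (Fin n) ℝ) :
    nucNorm (A + B) ≤ nucNorm A + nucNorm B := by
  have hpsd : ((1 : Matrix (Fin n) (Fin n) ℝ) - (Qm (A+B))ᵀ * Qm (A+B)).PosSemidef := by
    rw [QmT_mul_Qm]; exact one_sub_Pm_psd (A+B)
  have h := trace_QmT_mul (A + B)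
  rw [Matrix.mul_add, trace_add] at h
  have h1 := trace_le A (Qm (A+B)) hpsd
  have h2 := trace_le B (Qm (A+B)) hpsd
  linarith

lemma v_dot_cross (B : Matrix (Fin m) (Fin n) ℝ) (h2 : A * Bᵀ = 0) (i j)
    (hi : eig A i ≠ 0) (hj : eig B j ≠ 0) : v A i ⬝ᵥ v B j = 0 := by
  have hvi : v A i = (eig A i)⁻¹ • ((Aᴴ * A) *ᵥ v A i) := by
    rw [mulVec_v, smul_smul, inv_mul_cancel₀ hi, one_smul]
  have hvj : v B j = (eig B j)⁻¹ • ((Bᴴ * B) *ᵥ v B j) := by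
    rw [mulVec_v, smul_smul, inv_mul_cancel₀ hj, one_smul]
  rw [hvi, hvj, smul_dotProduct, dotProduct_smul]
  have : ((Aᴴ * A) *ᵥ v A i) ⬝ᵥ ((Bᴴ * B) *ᵥ v B j) = 0 := by
    rw [conjT_eq, conjT_eq, ← mulVec_mulVec, ← mulVec_mulVec, dot_mulVec_left,
      mulVec_mulVec, h2]
    simp
  rw [this]
  simp

lemma Pm_cross (B : Matrix (Fin m) (Fin n) ℝ) (h2 : A * Bᵀ = 0) : Pm A * Pm B = 0 := by
  unfold Pm
  rw [Finset.sum_mul]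
  rw [Finset.sum_eq_zero]
  intro i _
  rw [Finset.mul_sum, Finset.sum_eq_zero]
  intro j _
  rw [Matrix.smul_mul, Matrix.mul_smul, vmv_mul_vmv]
  rcases eq_or_ne (eig A i) 0 with hi | hi
  · simp [dd, hi]
  rcases eq_or_ne (eig B j) 0 with hj | hj
  · simp [dd, hj]
  rw [v_dot_cross A B h2 i j hi hj]
  simp

lemma nucNorm_add_ge (B : Matrix (Fin m) (Fin n) ℝ) (h1 : Aᵀ * B = 0) (h2 : A * Bᵀ = 0) :
    nucNorm A + nucNorm B ≤ nucNorm (A + B) := by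
  set Q := Qm A + Qm B with hQdef
  have hBA1 : Bᵀ * A = 0 := by
    have := congrArg transpose h1
    rwa [transpose_mul, transpose_transpose, transpose_zero] at this
  have hBA2 : B * Aᵀ = 0 := by
    have := congrArg transpose h2
    rwa [transpose_mul, transpose_transpose, transpose_zero] at this
  have hcross1 : (Qm A)ᵀ * Qm B = 0 := by
    unfold Qm
    rw [transpose_mul, Wm_transpose, Matrix.mul_assoc, ← Matrix.mul_assoc Aᵀ B (Wm B), h1]
    simp
  have hcross2 : (Qm B)ᵀ * Qm A = 0 := by
    unfold Qm
    rw [transpose_mul, Wm_transpose, Matrix.mul_assoc, ← Matrix.mul_assoc Bᵀ A (Wm A), hBA1]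
    simp
  have hQQ : Qᵀ * Q = Pm A + Pm B := by
    rw [hQdef, transpose_add, Matrix.add_mul, Matrix.mul_add, Matrix.mul_add,
      QmT_mul_Qm, QmT_mul_Qm, hcross1, hcross2]
    abel
  have hpsd : ((1 : Matrix (Fin n) (Fin n) ℝ) - Qᵀ * Q).PosSemidef := by
    rw [hQQ]
    apply one_sub_psd_of_symm_idem
    · rw [transpose_add, Pm_transpose, Pm_transpose]
    · rw [Matrix.add_mul, Matrix.mul_add, Matrix.mul_add, Pm_idem, Pm_idem,
        Pm_cross A B h2, Pm_cross B A hBA2]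
      abel
  have htr : (Qᵀ * (A + B)).trace = nucNorm A + nucNorm B := by
    have hQAB : ((Qm A)ᵀ * B).trace = 0 := by
      unfold Qm
      rw [transpose_mul, Wm_transpose, Matrix.mul_assoc, h1]
      simp
    have hQBA : ((Qm B)ᵀ * A).trace = 0 := by
      unfold Qm
      rw [transpose_mul, Wm_transpose, Matrix.mul_assoc, hBA1]
      simp
    rw [hQdef, transpose_add, Matrix.add_mul, Matrix.mul_add, Matrix.mul_add,
      trace_add, trace_add, trace_add, trace_QmT_mul, trace_QmT_mul, hQAB, hQBA]
    ring
  have := trace_le (A + B) Q hpsd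
  rw [htr] at this
  exact this


lemma trace_S_eq_sum_eig : (Aᴴ * A).trace = ∑ i, eig A i := by
  conv_lhs => rw [(hS A).1.spectral_theorem]
  rw [Unitary.conjStarAlgAut_apply, Matrix.trace_mul_cycle]
  have h1 : (star (hS A).1.eigenvectorUnitary : Matrix (Fin n) (Fin n) ℝ) *
      ((hS A).1.eigenvectorUnitary : Matrix (Fin n) (Fin n) ℝ) = 1 :=
    (hS A).1.eigenvectorUnitary.2.1
  rw [h1, one_mul, Matrix.trace_diagonal]
  rfl

lemma card_ne_zero_eq_rank : ∑ i, dd A i = (A.rank : ℝ) := by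
  have h1 : (Aᴴ * A).rank = Fintype.card {i // eig A i ≠ 0} :=
    (hS A).1.rank_eq_card_non_zero_eigs
  rw [Matrix.rank_conjTranspose_mul_self] at h1
  rw [h1, Fintype.card_subtype]
  rw [Finset.card_eq_sum_ones]
  push_cast
  rw [Finset.sum_filter]
  congr 1; ext i
  unfold dd
  rcases eq_or_ne (eig A i) 0 with h | h <;> simp [h]

lemma nucNorm_le_sqrt_rank_mul (t : ℝ) (htA : (A.rank : ℝ) ≤ t) (ht : 0 ≤ t) :
    nucNorm A ≤ Real.sqrt t * Real.sqrt ((Aᴴ * A).trace) := by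
  rw [nucNorm_eq]
  have key : ∑ i, Real.sqrt (eig A i) = (dd A) ⬝ᵥ (fun i => Real.sqrt (eig A i)) := by
    unfold dotProduct
    congr 1; ext i
    unfold dd
    rcases eq_or_ne (eig A i) 0 with h | h <;> simp [h]
  rw [key]
  calc (dd A) ⬝ᵥ (fun i => Real.sqrt (eig A i))
      ≤ Real.sqrt ((dd A) ⬝ᵥ (dd A)) *
        Real.sqrt ((fun i => Real.sqrt (eig A i)) ⬝ᵥ (fun i => Real.sqrt (eig A i))) := dot_CS _ _
    _ ≤ Real.sqrt t * Real.sqrt ((Aᴴ * A).trace) := by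
        apply mul_le_mul
        · apply Real.sqrt_le_sqrt
          have hdd : (dd A) ⬝ᵥ (dd A) = ∑ i, dd A i := by
            unfold dotProduct dd
            congr 1; ext i
            rcases eq_or_ne (eig A i) 0 with h | h <;> simp [h]
          rw [hdd, card_ne_zero_eq_rank]
          exact htA
        · apply Real.sqrt_le_sqrt
          rw [trace_S_eq_sum_eig]
          unfold dotProduct
          apply le_of_eq
          congr 1; ext i
          exact Real.mul_self_sqrt (eig_nonneg A i)
        · exact Real.sqrt_nonneg _
        · exact Real.sqrt_nonneg _


lemma eq_of_mulVec_eq {X Y : Matrix (Fin m) (Fin n) ℝ} (h : ∀ x, X *ᵥ x = Y *ᵥ x) : X = Y := by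
  ext i j
  have := congrFun (h (Pi.single j 1)) i
  simpa [mulVec, dotProduct, Pi.single_apply] using this

lemma zero_of_trace_transpose_mul_self {X : Matrix (Fin m) (Fin n) ℝ}
    (h : (Xᵀ * X).trace = 0) : X = 0 := by
  have hsum : ∑ j, ∑ i, (X i j)^2 = 0 := by
    rw [← h]
    simp [trace, diag, mul_apply, pow_two]
  ext i j
  have h1 : ∀ j ∈ Finset.univ, (0:ℝ) ≤ ∑ i, (X i j)^2 := by
    intro j _; positivity
  have h2 := (Finset.sum_eq_zero_iff_of_nonneg h1).mp hsum j (Finset.mem_univ j)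
  have h3 : ∀ i ∈ Finset.univ, (0:ℝ) ≤ (X i j)^2 := by intro i _; positivity
  have h4 := (Finset.sum_eq_zero_iff_of_nonneg h3).mp h2 i (Finset.mem_univ i)
  simpa using pow_eq_zero_iff (n := 2) (by norm_num) |>.mp h4

lemma rank_add_le (X Y : Matrix (Fin m) (Fin n) ℝ) : (X + Y).rank ≤ X.rank + Y.rank := by
  unfold Matrix.rank
  have hle : LinearMap.range (X + Y).mulVecLin ≤
      LinearMap.range X.mulVecLin ⊔ LinearMap.range Y.mulVecLin := by
    rintro z ⟨x, rfl⟩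
    rw [Matrix.mulVecLin_add]
    exact Submodule.add_mem_sup (LinearMap.mem_range_self _ x) (LinearMap.mem_range_self _ x)
  calc Module.finrank ℝ (LinearMap.range (X + Y).mulVecLin)
      ≤ Module.finrank ℝ (LinearMap.range X.mulVecLin ⊔ LinearMap.range Y.mulVecLin : Submodule ℝ (Fin m → ℝ)) :=
        Submodule.finrank_mono hle
    _ ≤ _ := Submodule.finrank_add_le_finrank_add_finrank _ _


/-- elements of the model tangent space decompose. -/
lemma mem_span_decomp {r : ℕ} (U : Matrix (Fin m) (Fin r) ℝ) (V : Matrix (Fin n) (Fin r) ℝ)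
    (Z : Matrix (Fin m) (Fin n) ℝ)
    (hZ : Z ∈ Submodule.span ℝ {Z : Matrix (Fin m) (Fin n) ℝ |
      (∃ A : Matrix (Fin r) (Fin n) ℝ, Z = U * A) ∨
      (∃ B : Matrix (Fin m) (Fin r) ℝ, Z = B * Vᵀ)}) :
    ∃ (A : Matrix (Fin r) (Fin n) ℝ) (B : Matrix (Fin m) (Fin r) ℝ), Z = U * A + B * Vᵀ := by
  let f : Matrix (Fin r) (Fin n) ℝ →ₗ[ℝ] Matrix (Fin m) (Fin n) ℝ :=
    { toFun := fun A => U * A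
      map_add' := fun a b => Matrix.mul_add U a b
      map_smul' := fun c a => Matrix.mul_smul U c a }
  let g : Matrix (Fin m) (Fin r) ℝ →ₗ[ℝ] Matrix (Fin m) (Fin n) ℝ :=
    { toFun := fun B => B * Vᵀ
      map_add' := fun a b => Matrix.add_mul a b Vᵀ
      map_smul' := fun c a => Matrix.smul_mul c a Vᵀ }
  have hset : {Z : Matrix (Fin m) (Fin n) ℝ |
      (∃ A : Matrix (Fin r) (Fin n) ℝ, Z = U * A) ∨
      (∃ B : Matrix (Fin m) (Fin r) ℝ, Z = B * Vᵀ)}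
      = (Set.range f) ∪ (Set.range g) := by
    ext W
    simp only [Set.mem_setOf_eq, Set.mem_union, Set.mem_range]
    constructor
    · rintro (⟨A, rfl⟩ | ⟨B, rfl⟩)
      · exact Or.inl ⟨A, rfl⟩
      · exact Or.inr ⟨B, rfl⟩
    · rintro (⟨A, rfl⟩ | ⟨B, rfl⟩)
      · exact Or.inl ⟨A, rfl⟩
      · exact Or.inr ⟨B, rfl⟩
  rw [hset, Submodule.span_union, ← LinearMap.coe_range f, ← LinearMap.coe_range g,
    Submodule.span_eq, Submodule.span_eq] at hZ
  rcases Submodule.mem_sup.mp hZ with ⟨a, ⟨A, rfl⟩, b, ⟨B, rfl⟩, rfl⟩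
  exact ⟨A, B, rfl⟩

end NNaux

open NNaux in
theorem stmt18 (m n r : ℕ) (M : Matrix (Fin m) (Fin n) ℝ) (hrank : M.rank = r)
    (U : Matrix (Fin m) (Fin r) ℝ) (V : Matrix (Fin n) (Fin r) ℝ)
    (hU : Uᵀ * U = 1) (hV : Vᵀ * V = 1)
    (hUrange : LinearMap.range U.mulVecLin = LinearMap.range M.mulVecLin)
    (hVrange : LinearMap.range V.mulVecLin = LinearMap.range Mᵀ.mulVecLin)
    (T : Submodule ℝ (Matrix (Fin m) (Fin n) ℝ))
    (hT : T = Submodule.span ℝ {Z | (∃ A : Matrix (Fin r) (Fin n) ℝ, Z = U * A) ∨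
      (∃ B : Matrix (Fin m) (Fin r) ℝ, Z = B * Vᵀ)})
    (PT PTperp : Matrix (Fin m) (Fin n) ℝ → Matrix (Fin m) (Fin n) ℝ)
    (hPT_mem : ∀ H, PT H ∈ T)
    (hPT_orth : ∀ H, ∀ W ∈ T, ((H - PT H)ᵀ * W).trace = 0)
    (hPTperp : ∀ H, PTperp H = H - PT H)
    (H : Matrix (Fin m) (Fin n) ℝ) (hH : nucNorm (M + H) ≤ nucNorm M) :
    nucNorm (PTperp H) ≤ nucNorm (PT H) ∧
      nucNorm H ≤ 2 * Real.sqrt (2 * r) * frobNorm H := by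
  set G := PT H with hG
  set Z := H - G with hZ
  rw [hPTperp H, ← hZ]
  -- membership helpers
  have hmemUA : ∀ A : Matrix (Fin r) (Fin n) ℝ, U * A ∈ T := fun A => by
    rw [hT]; exact Submodule.subset_span (Or.inl ⟨A, rfl⟩)
  have hmemBV : ∀ B : Matrix (Fin m) (Fin r) ℝ, B * Vᵀ ∈ T := fun B => by
    rw [hT]; exact Submodule.subset_span (Or.inr ⟨B, rfl⟩)
  -- UᵀZ = 0
  have hUZ : Uᵀ * Z = 0 := by
    apply zero_of_trace_transpose_mul_self
    have h0 := hPT_orth H (U * (Uᵀ * Z)) (hmemUA _)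
    rw [← hG, ← hZ] at h0
    have he : (Uᵀ * Z)ᵀ * (Uᵀ * Z) = Zᵀ * (U * (Uᵀ * Z)) := by
      rw [transpose_mul, transpose_transpose, Matrix.mul_assoc]
    rw [he]
    exact h0
  -- Z V = 0
  have hZV : Z * V = 0 := by
    apply zero_of_trace_transpose_mul_self
    have h0 := hPT_orth H ((Z * V) * Vᵀ) (hmemBV _)
    rw [← hG, ← hZ] at h0
    have he : (Z * V)ᵀ * (Z * V) = Vᵀ * (Zᵀ * (Z * V)) := by
      rw [transpose_mul, Matrix.mul_assoc]
    rw [he, trace_mul_comm, Matrix.mul_assoc]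
    exact h0
  -- M factorizations
  have hMU : M = U * (Uᵀ * M) := by
    apply (eq_of_mulVec_eq _).symm
    intro x
    have hx : M *ᵥ x ∈ LinearMap.range U.mulVecLin := by
      rw [hUrange]; exact ⟨x, rfl⟩
    rcases hx with ⟨c, hc⟩
    simp only [Matrix.mulVecLin_apply] at hc
    calc (U * (Uᵀ * M)) *ᵥ x = U *ᵥ ((Uᵀ * M) *ᵥ x) := by rw [← mulVec_mulVec]
      _ = U *ᵥ (Uᵀ *ᵥ (M *ᵥ x)) := by rw [← mulVec_mulVec]
      _ = U *ᵥ (Uᵀ *ᵥ (U *ᵥ c)) := by rw [hc]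
      _ = U *ᵥ ((Uᵀ * U) *ᵥ c) := by rw [← mulVec_mulVec]
      _ = U *ᵥ c := by rw [hU, one_mulVec]
      _ = M *ᵥ x := hc
  have hMV : M = (M * V) * Vᵀ := by
    have h' : Mᵀ = V * (Vᵀ * Mᵀ) := by
      apply (eq_of_mulVec_eq _).symm
      intro x
      have hx : Mᵀ *ᵥ x ∈ LinearMap.range V.mulVecLin := by
        rw [hVrange]; exact ⟨x, rfl⟩
      rcases hx with ⟨c, hc⟩
      simp only [Matrix.mulVecLin_apply] at hc
      calc (V * (Vᵀ * Mᵀ)) *ᵥ x = V *ᵥ ((Vᵀ * Mᵀ) *ᵥ x) := by rw [← mulVec_mulVec]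
        _ = V *ᵥ (Vᵀ *ᵥ (Mᵀ *ᵥ x)) := by rw [← mulVec_mulVec]
        _ = V *ᵥ (Vᵀ *ᵥ (V *ᵥ c)) := by rw [hc]
        _ = V *ᵥ ((Vᵀ * V) *ᵥ c) := by rw [← mulVec_mulVec]
        _ = V *ᵥ c := by rw [hV, one_mulVec]
        _ = Mᵀ *ᵥ x := hc
    have := congrArg transpose h'
    rwa [transpose_transpose, transpose_mul, transpose_mul, transpose_transpose,
      transpose_transpose] at this
  -- orthogonality of M and Z as matrices
  have hMTZ : Mᵀ * Z = 0 := by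
    conv_lhs => rw [hMU]
    rw [transpose_mul, Matrix.mul_assoc, hUZ, Matrix.mul_zero]
  have hMZT : M * Zᵀ = 0 := by
    conv_lhs => rw [hMV]
    have : Vᵀ * Zᵀ = (Z * V)ᵀ := (transpose_mul Z V).symm
    rw [Matrix.mul_assoc, this, hZV, transpose_zero, Matrix.mul_zero]
  -- part 1
  have part1 : nucNorm Z ≤ nucNorm G := by
    have hge : nucNorm M + nucNorm Z ≤ nucNorm (M + Z) := by
      apply nucNorm_add_ge M Z hMTZ hMZT
    have heq : M + Z = (M + H) + (-G) := by rw [hZ]; abel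
    have htri : nucNorm (M + Z) ≤ nucNorm (M + H) + nucNorm (-G) := by
      rw [heq]; exact nucNorm_triangle _ _
    rw [nucNorm_neg] at htri
    linarith
  constructor
  · exact part1
  -- part 2
  have hfrobG : frobNorm G ≤ frobNorm H := by
    have h0 := hPT_orth H G (hPT_mem H)
    rw [← hG, ← hZ] at h0
    have hHGZ : H = G + Z := by rw [hZ]; abel
    have htr : (Hᵀ * H).trace = (Gᵀ * G).trace + (Zᵀ * Z).trace := by
      conv_lhs => rw [hHGZ]
      rw [transpose_add, Matrix.add_mul, Matrix.mul_add, Matrix.mul_add, trace_add, trace_add,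
        trace_add]
      have h1 : (Gᵀ * Z).trace = 0 := by
        rw [← Matrix.trace_transpose (Gᵀ * Z), transpose_mul, transpose_transpose]
        exact h0
      rw [h1, h0]
      ring
    have hfr : ∀ X : Matrix (Fin m) (Fin n) ℝ, frobNorm X = Real.sqrt ((Xᵀ * X).trace) := by
      intro X
      unfold frobNorm
      congr 1
      rw [trace]
      simp only [diag, mul_apply, transpose_apply, pow_two]
      rw [Finset.sum_comm]
    rw [hfr, hfr, htr]
    apply Real.sqrt_le_sqrt
    have : 0 ≤ (Zᵀ * Z).trace := by
      have := trace_S_eq_sum_eig Z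
      rw [conjT_eq] at this
      rw [this]
      apply Finset.sum_nonneg
      intro i _
      exact eig_nonneg Z i
    linarith
  have hrankG : ((G.rank : ℝ)) ≤ 2 * r := by
    rcases mem_span_decomp U V G (hT ▸ hPT_mem H) with ⟨A, B, hAB⟩
    have h1 : G.rank ≤ r + r := by
      rw [hAB]
      calc (U * A + B * Vᵀ).rank ≤ (U * A).rank + (B * Vᵀ).rank := rank_add_le _ _
        _ ≤ r + r := by
          apply add_le_add
          · exact le_trans (Matrix.rank_mul_le_left U A) (by simpa using Matrix.rank_le_card_width U)
          · exact le_trans (Matrix.rank_mul_le_right B Vᵀ) (by simpa using Matrix.rank_le_card_height Vᵀ)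
    calc ((G.rank : ℝ)) ≤ ((r + r : ℕ) : ℝ) := by exact_mod_cast h1
      _ = 2 * r := by push_cast; ring
  have hnucG : nucNorm G ≤ Real.sqrt (2 * r) * frobNorm H := by
    have h1 := nucNorm_le_sqrt_rank_mul G (2 * r) hrankG (by positivity)
    have h2 : Real.sqrt ((Gᴴ * G).trace) = frobNorm G := by
      rw [conjT_eq]
      unfold frobNorm
      congr 1
      rw [trace]
      simp only [diag, mul_apply, transpose_apply, pow_two]
      rw [Finset.sum_comm]
    rw [h2] at h1
    calc nucNorm G ≤ Real.sqrt (2 * r) * frobNorm G := h1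
      _ ≤ Real.sqrt (2 * r) * frobNorm H := by
          apply mul_le_mul_of_nonneg_left hfrobG (Real.sqrt_nonneg _)
  have hHGZ : H = G + Z := by rw [hZ]; abel
  have htriH : nucNorm H ≤ nucNorm G + nucNorm Z := by
    conv_lhs => rw [hHGZ]
    exact nucNorm_triangle _ _
  calc nucNorm H ≤ nucNorm G + nucNorm Z := htriH
    _ ≤ 2 * nucNorm G := by linarith
    _ ≤ 2 * (Real.sqrt (2 * r) * frobNorm H) := by linarith
    _ = 2 * Real.sqrt (2 * r) * frobNorm H := by ring
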